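/- Let f ∈ ℂ[x₀,…,xₙ] be a homogeneous polynomial of degree d ≥ 1, and suppose that the ℂ-vector space of linear forms ℓ = a₀y₀ + ⋯ + aₙyₙ such that the corresponding derivation ℓ(∂)f = a₀∂f/∂x₀ + ⋯ + aₙ∂f/∂xₙ vanishes has dimension at least n − 2. Then there exist three linear forms l₁, l₂, l₃ ∈ ℂ[x₀,…,xₙ] and a homogeneous polynomial g ∈ ℂ[z₀,z₁,z₂] of degree d such that f = g(l₁,l₂,l₃). -/

import Mathlib

open MvPolynomial

/-- The linear map sending the coefficient vector `a` of a linear form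
`ℓ = a₀y₀ + ⋯ + aₙyₙ` to the directional derivative `ℓ(∂)f = ∑ aᵢ ∂f/∂xᵢ`. -/

noncomputable def linForms {m : ℕ} (T : Matrix (Fin m) (Fin m) ℂ) :
    Fin m → MvPolynomial (Fin m) ℂ := fun i => ∑ j, C (T i j) * X j

lemma linForms_homog {m : ℕ} (T : Matrix (Fin m) (Fin m) ℂ) (i : Fin m) :
    (linForms T i).IsHomogeneous 1 :=
  IsHomogeneous.sum _ _ _ fun _ _ => (isHomogeneous_X _ _).C_mul _

lemma pderiv_linForms {m : ℕ} (T : Matrix (Fin m) (Fin m) ℂ) (i k : Fin m) :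
    pderiv k (linForms T i) = C (T i k) := by
  simp [linForms, pderiv_X, Pi.single_apply]

lemma pderiv_aeval_linForms {m : ℕ} (T : Matrix (Fin m) (Fin m) ℂ) (k : Fin m)
    (f : MvPolynomial (Fin m) ℂ) :
    pderiv k (aeval (linForms T) f) =
      ∑ i, C (T i k) * aeval (linForms T) (pderiv i f) := by
  induction f using MvPolynomial.induction_on with
  | C a => simp
  | add p q hp hq =>
    simp only [map_add, hp, hq, mul_add, ← Finset.sum_add_distrib]
  | mul_X p j hp =>
    simp only [map_mul, aeval_X, pderiv_mul, hp, pderiv_X, Pi.single_apply, map_add,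
      mul_add, Finset.sum_add_distrib]
    congr 1
    · rw [Finset.sum_mul]; congr 1; ext i; rw [mul_assoc]
    · rw [Finset.sum_congr rfl (fun i _ => by
        rw [apply_ite (aeval (linForms T)), map_one, map_zero, mul_ite, mul_one, mul_zero,
          mul_ite, mul_zero])]
      rw [Finset.sum_ite_eq Finset.univ j (fun i => C (T i k) * aeval (linForms T) p)]
      simp [pderiv_linForms, mul_comm]


lemma coeff_pderiv {σ : Type*} [DecidableEq σ] (i : σ) (md : σ →₀ ℕ)
    (f : MvPolynomial σ ℂ) :
    coeff md (pderiv i f) = (md i + 1 : ℕ) * coeff (md + Finsupp.single i 1) f := by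
  induction f using MvPolynomial.induction_on' with
  | add p q hp hq => simp [hp, hq, mul_add]
  | monomial s a =>
    rw [pderiv_monomial, coeff_monomial, coeff_monomial]
    by_cases h : s = md + Finsupp.single i 1
    · have h1 : s - Finsupp.single i 1 = md := by
        rw [h]; exact add_tsub_cancel_right _ _
      have h2 : s i = md i + 1 := by simp [h]
      rw [if_pos h1, if_pos h, h2]
      push_cast; ring
    · rw [if_neg h, mul_zero]
      by_cases h1 : s - Finsupp.single i 1 = md
      · rw [if_pos h1]
        by_cases h2 : s i = 0
        · simp [h2]
        · exfalso; apply h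
          ext j
          rcases eq_or_ne j i with rfl | hji
          · simp only [Finsupp.add_apply, Finsupp.single_eq_same]
            rw [← h1]; simp only [Finsupp.tsub_apply, Finsupp.single_eq_same]
            omega
          · rw [← h1]
            simp [Finsupp.single_eq_of_ne (Ne.symm hji), hji]
      · rw [if_neg h1]

lemma not_mem_vars_of_pderiv_eq_zero {σ : Type*} [DecidableEq σ] {i : σ}
    {f : MvPolynomial σ ℂ} (h : pderiv i f = 0) : i ∉ f.vars := by
  intro hi
  rw [mem_vars] at hi
  obtain ⟨s, hs, hsi⟩ := hi
  rw [Finsupp.mem_support_iff] at hsi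
  have hs' : (s - Finsupp.single i 1) + Finsupp.single i 1 = s := by
    ext j
    rcases eq_or_ne j i with rfl | hji
    · simp only [Finsupp.add_apply, Finsupp.tsub_apply, Finsupp.single_eq_same]; omega
    · simp [Finsupp.single_eq_of_ne (Ne.symm hji), hji]
  have := coeff_pderiv i (s - Finsupp.single i 1) f
  rw [h, hs', coeff_zero] at this
  have hc : coeff s f = 0 := by
    set t : σ →₀ ℕ := s - Finsupp.single i 1 with ht
    have hne : ((t i + 1 : ℕ) : ℂ) ≠ 0 := by
      exact_mod_cast Nat.succ_ne_zero (t i)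
    exact (mul_eq_zero.mp this.symm).resolve_left hne
  exact (mem_support_iff.mp hs) hc

lemma aeval_linForms_linForms {m : ℕ} (T B : Matrix (Fin m) (Fin m) ℂ) (i : Fin m) :
    aeval (linForms B) (linForms T i) = linForms (T * B) i := by
  simp only [linForms, map_sum, map_mul, aeval_X, aeval_C, algebraMap_eq, Finset.mul_sum]
  rw [Finset.sum_comm]
  refine Finset.sum_congr rfl fun l _ => ?_
  rw [Matrix.mul_apply, map_sum, Finset.sum_mul]
  refine Finset.sum_congr rfl fun j _ => ?_
  rw [← mul_assoc, ← C_mul]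

lemma aeval_linForms_inv {m : ℕ} (T B : Matrix (Fin m) (Fin m) ℂ) (hTB : T * B = 1)
    (f : MvPolynomial (Fin m) ℂ) :
    aeval (linForms B) (aeval (linForms T) f) = f := by
  have hX : (fun i => aeval (linForms B) (linForms T i)) = (X : Fin m → MvPolynomial (Fin m) ℂ) := by
    funext i
    rw [aeval_linForms_linForms, hTB]
    simp [linForms, Matrix.one_apply, apply_ite C, ite_mul, Finset.sum_ite_eq']
  rw [← AlgHom.comp_apply, comp_aeval, hX, aeval_X_left_apply]


lemma exists_good_matrix {m : ℕ} (K : Submodule ℂ (Fin m → ℂ))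
    (hK : m ≤ Module.finrank ℂ K + 3) :
    ∃ T B : Matrix (Fin m) (Fin m) ℂ, T * B = 1 ∧
      ∀ j : Fin m, 3 ≤ (j : ℕ) → (fun i => T i j) ∈ K := by
  obtain ⟨W, hW⟩ := Submodule.exists_isCompl K
  set k := Module.finrank ℂ K with hk
  set r := Module.finrank ℂ W with hr
  have hrk : r + k = m := by
    have := Submodule.finrank_add_eq_of_isCompl hW.symm
    simpa [Module.finrank_fintype_fun_eq_card] using this
  have hr3 : r ≤ 3 := by omega
  let bW := Module.finBasis ℂ W
  let bK := Module.finBasis ℂ K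
  let b0 := (bW.prod bK).map (Submodule.prodEquivOfIsCompl W K hW.symm)
  let b' := b0.reindex (finSumFinEquiv.trans (finCongr hrk))
  have hbK : ∀ j : Fin m, 3 ≤ (j : ℕ) → (b' j : Fin m → ℂ) ∈ K := by
    intro j hj
    have hjr : r ≤ (j : ℕ) := le_trans hr3 hj
    have hjk : (j : ℕ) - r < k := by omega
    have he : (finSumFinEquiv.trans (finCongr hrk)).symm j = Sum.inr ⟨(j : ℕ) - r, hjk⟩ := by
      rw [Equiv.symm_apply_eq]
      simp only [Equiv.trans_apply, finSumFinEquiv_apply_right, finCongr_apply]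
      ext
      simp [Fin.natAdd]
      omega
    rw [Module.Basis.reindex_apply, he]
    simp only [b0, Module.Basis.map_apply, Module.Basis.prod_apply]
    simp [Submodule.coe_prodEquivOfIsCompl]
  let E : (Fin m → ℂ) ≃ₗ[ℂ] (Fin m → ℂ) := (Pi.basisFun ℂ (Fin m)).equiv b' (Equiv.refl _)
  refine ⟨LinearMap.toMatrix (Pi.basisFun ℂ (Fin m)) (Pi.basisFun ℂ (Fin m)) E.toLinearMap,
    LinearMap.toMatrix (Pi.basisFun ℂ (Fin m)) (Pi.basisFun ℂ (Fin m)) E.symm.toLinearMap,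
    ?_, ?_⟩
  · rw [← LinearMap.toMatrix_comp]
    have : E.toLinearMap ∘ₗ E.symm.toLinearMap = LinearMap.id := by
      ext x; simp
    rw [this, LinearMap.toMatrix_id]
  · intro j hj
    have : (fun i => LinearMap.toMatrix (Pi.basisFun ℂ (Fin m)) (Pi.basisFun ℂ (Fin m))
        E.toLinearMap i j) = (b' j : Fin m → ℂ) := by
      funext i
      rw [LinearMap.toMatrix_apply]
      simp only [Pi.basisFun_repr, LinearEquiv.coe_coe, E]
      rw [Module.Basis.equiv_apply]
      simp
    rw [this]
    exact hbK j hj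

noncomputable def dirDeriv {n : ℕ} (f : MvPolynomial (Fin n) ℂ) :
    (Fin n → ℂ) →ₗ[ℂ] MvPolynomial (Fin n) ℂ where
  toFun a := ∑ i, a i • MvPolynomial.pderiv i f
  map_add' a b := by simp [add_smul, Finset.sum_add_distrib]
  map_smul' c a := by simp [Finset.smul_sum, mul_smul]

theorem stmt_10 (n d : ℕ) (hd : 1 ≤ d)
    (f : MvPolynomial (Fin (n + 1)) ℂ) (hf : f.IsHomogeneous d)
    (hker : n - 2 ≤ Module.finrank ℂ ↥(LinearMap.ker (dirDeriv f))) :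
    ∃ l : Fin 3 → MvPolynomial (Fin (n + 1)) ℂ,
      (∀ i, (l i).IsHomogeneous 1) ∧
      ∃ g : MvPolynomial (Fin 3) ℂ, g.IsHomogeneous d ∧ f = aeval l g := by
  set K := LinearMap.ker (dirDeriv f) with hKdef
  have hK : n + 1 ≤ Module.finrank ℂ K + 3 := by omega
  obtain ⟨T, B, hTB, hcol⟩ := exists_good_matrix K hK
  set F := aeval (linForms T) f with hF
  have hFhom : F.IsHomogeneous d := by
    have := hf.aeval (linForms T) (linForms_homog T)
    rwa [one_mul] at this
  have hFp : ∀ k : Fin (n + 1), 3 ≤ (k : ℕ) → pderiv k F = 0 := by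
    intro k hk
    rw [hF, pderiv_aeval_linForms]
    have : ∀ i : Fin (n + 1), C (T i k) * aeval (linForms T) (pderiv i f)
        = aeval (linForms T) (T i k • pderiv i f) := by
      intro i; rw [smul_eq_C_mul, map_mul, aeval_C]; rfl
    simp_rw [this, ← map_sum]
    have hker0 : dirDeriv f (fun i => T i k) = 0 := LinearMap.mem_ker.mp (hcol k hk)
    have : (∑ i, T i k • pderiv i f) = 0 := hker0
    rw [this, map_zero]
  have hFvars : ∀ j ∈ F.vars, (j : ℕ) < 3 := by
    intro j hj
    by_contra h
    exact not_mem_vars_of_pderiv_eq_zero (hFp j (not_lt.mp h)) hj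
  set u : Fin (n + 1) → MvPolynomial (Fin 3) ℂ :=
    fun k => if h : (k : ℕ) < 3 then X ⟨k, h⟩ else 0 with hu
  set l : Fin 3 → MvPolynomial (Fin (n + 1)) ℂ :=
    fun j => if h : (j : ℕ) < n + 1 then linForms B ⟨j, h⟩ else 0 with hl
  refine ⟨l, ?_, aeval u F, ?_, ?_⟩
  · intro j
    rw [hl]
    dsimp only
    split
    · exact linForms_homog B _
    · exact isHomogeneous_zero _ _ _
  · have : ∀ k, (u k).IsHomogeneous 1 := by
      intro k; rw [hu]; dsimp only; split
      · exact isHomogeneous_X _ _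
      · exact isHomogeneous_zero _ _ _
    have h2 := hFhom.aeval u this
    rwa [one_mul] at h2
  · have key : aeval l (aeval u F) = aeval (linForms B) F := by
      rw [← AlgHom.comp_apply, comp_aeval]
      refine MvPolynomial.hom_congr_vars ?_ ?_ rfl
      · ext a
        simp
      · intro i hi _
        have h3 : (i : ℕ) < 3 := hFvars i hi
        have hmi : (i : ℕ) < n + 1 := i.isLt
        show aeval (fun k => aeval l (u k)) (X i) = aeval (linForms B) (X i)
        rw [aeval_X, aeval_X, hu, hl]
        dsimp only
        rw [dif_pos h3, aeval_X]
        dsimp only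
        rw [dif_pos hmi]
    rw [key, hF, aeval_linForms_inv T B hTB]
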